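/- For every integer n ≥ 0, the polynomial identity Ã_n(x,y,q,p) = y·p·q·A_n(x,y,q) + Σ_{k=1}^{n} C(n,k)·x^k·q·p^{k+1}·A_{n−k}(x,y,q) holds in the polynomial ring in the variables x, y, q, p, where C(n,k) is the binomial coefficient. -/

import Mathlib

open Finset

/-- `exc(σ)`: the number of excedances of `σ`. -/
def exc {n : ℕ} (σ : Equiv.Perm (Fin n)) : ℕ :=
  (Finset.univ.filter fun i => i < σ i).card

/-- `fixp(σ)`: the number of fixed points of `σ`. -/
def fixp {n : ℕ} (σ : Equiv.Perm (Fin n)) : ℕ :=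
  (Finset.univ.filter fun i => σ i = i).card

/-- `cyc(σ)`: the number of cycles of `σ`, fixed points counted. -/
def cyc {n : ℕ} (σ : Equiv.Perm (Fin n)) : ℕ :=
  σ.cycleType.card + fixp σ

/-- `𝒬̂_{m+1}`: permutations `σ` of `{1, …, m+1}` such that every element `x` other
than the largest element in the cycle of `σ` containing the largest element
satisfies `σ(x) > x`. -/
noncomputable def Qhat (m : ℕ) : Finset (Equiv.Perm (Fin (m + 1))) :=
  Finset.univ.filter fun σ =>
    ∀ x, σ.SameCycle x (Fin.last m) → x ≠ Fin.last m → x < σ x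

/-- `fcyc(σ)`: the number of elements of the cycle of `σ` containing the largest
element. -/
noncomputable def fcyc {m : ℕ} (σ : Equiv.Perm (Fin (m + 1))) : ℕ :=
  (Finset.univ.filter fun x => σ.SameCycle x (Fin.last m)).card

/-- `A_n(x,y,q) = Σ_{σ ∈ S_n} x^{exc σ} y^{fix σ} q^{cyc σ}` (with `A_0 = 1`). -/
def Apoly {R : Type*} [CommRing R] (n : ℕ) (x y q : R) : R :=
  ∑ σ : Equiv.Perm (Fin n), x ^ exc σ * y ^ fixp σ * q ^ cyc σ

open Equiv Equiv.Perm
variable {n : ℕ}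


def cList (n : ℕ) (S : Finset (Fin (n+1))) : List (Fin (n+1)) :=
  S.sort (· ≤ ·) ++ [Fin.last n]

def cPerm (n : ℕ) (S : Finset (Fin (n+1))) : Perm (Fin (n+1)) :=
  (cList n S).formPerm

lemma cList_sorted {S : Finset (Fin (n+1))} (hS : Fin.last n ∉ S) :
    (cList n S).Pairwise (· < ·) := by
  rw [cList, List.pairwise_append]
  refine ⟨S.sortedLT_sort.pairwise, List.pairwise_singleton _ _, ?_⟩
  intro x hx y hy
  simp only [List.mem_singleton] at hy
  subst hy
  exact Fin.lt_last_iff_ne_last.mpr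
    (fun h => hS (h ▸ (Finset.mem_sort (α := Fin (n+1)) (· ≤ ·)).mp hx))

lemma cList_nodup {S : Finset (Fin (n+1))} (hS : Fin.last n ∉ S) :
    (cList n S).Nodup := (cList_sorted hS).nodup

lemma mem_cList {S : Finset (Fin (n+1))} {x : Fin (n+1)} :
    x ∈ cList n S ↔ x ∈ insert (Fin.last n) S := by
  simp [cList, Finset.mem_insert, or_comm]

lemma cList_length {S : Finset (Fin (n+1))} : (cList n S).length = S.card + 1 := by
  simp [cList]

lemma cPerm_support_le {S : Finset (Fin (n+1))} :
    (cPerm n S).support ⊆ insert (Fin.last n) S := by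
  intro x hx
  have := List.support_formPerm_le (cList n S) hx
  rwa [List.mem_toFinset, mem_cList] at this

lemma cPerm_empty : cPerm n (∅ : Finset (Fin (n+1))) = 1 := by
  rw [cPerm, cList]
  simp [List.formPerm_singleton]

lemma cPerm_lt_apply {S : Finset (Fin (n+1))} (hS : Fin.last n ∉ S) {x : Fin (n+1)}
    (hx : x ∈ S) : x < cPerm n S x := by
  have hxl : x ∈ S.sort (· ≤ ·) := (Finset.mem_sort (α := Fin (n+1)) (· ≤ ·)).mpr hx
  obtain ⟨i, hi, rfl⟩ := List.getElem_of_mem hxl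
  rw [Finset.length_sort] at hi
  have hi' : i < (cList n S).length := by rw [cList_length]; omega
  have h2 : i + 1 < (cList n S).length := by rw [cList_length]; omega
  have hx1 : (cList n S)[i]'hi' = (S.sort (· ≤ ·))[i]'(by rw [Finset.length_sort]; omega) := by
    simp only [cList]
    exact List.getElem_append_left _
  have key := List.formPerm_apply_getElem _ (cList_nodup hS) i hi'
  have hlt : (i + 1) % (cList n S).length = i + 1 := by
    rw [cList_length]; exact Nat.mod_eq_of_lt (by omega)
  simp only [hlt] at key
  rw [← hx1, cPerm, key]
  exact List.pairwise_iff_getElem.mp (cList_sorted hS) i (i+1) hi' h2 (Nat.lt_succ_self i)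

lemma cPerm_isCycle {S : Finset (Fin (n+1))} (hS : Fin.last n ∉ S) (hne : S.Nonempty) :
    (cPerm n S).IsCycle := by
  apply List.isCycle_formPerm (cList_nodup hS)
  rw [cList_length]
  have := Finset.card_pos.mpr hne
  omega

lemma cPerm_support {S : Finset (Fin (n+1))} (hS : Fin.last n ∉ S) (hne : S.Nonempty) :
    (cPerm n S).support = insert (Fin.last n) S := by
  rw [cPerm, List.support_formPerm_of_nodup _ (cList_nodup hS)]
  · ext x; rw [List.mem_toFinset]; exact mem_cList
  · intro x h
    have : (cList n S).length = 1 := by rw [h]; rfl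
    rw [cList_length] at this
    have := Finset.card_pos.mpr hne
    omega

lemma cPerm_cycleType {S : Finset (Fin (n+1))} (hS : Fin.last n ∉ S) (hne : S.Nonempty) :
    (cPerm n S).cycleType = {S.card + 1} := by
  rw [(cPerm_isCycle hS hne).cycleType, cPerm_support hS hne,
    Finset.card_insert_of_notMem hS]

lemma getElem_cList_mem_S {S : Finset (Fin (n+1))} {i : ℕ} (hi : i < S.card) :
    ∀ h, (cList n S)[i]'h ∈ S := by
  intro h
  have : (cList n S)[i]'h = (S.sort (· ≤ ·))[i]'(by rw [Finset.length_sort]; omega) := by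
    simp only [cList]
    exact List.getElem_append_left _
  rw [this]
  exact (Finset.mem_sort (α := Fin (n+1)) (· ≤ ·)).mp (List.getElem_mem _)

lemma cPerm_unique {S : Finset (Fin (n+1))} (hS : Fin.last n ∉ S) (σ : Perm (Fin (n+1)))
    (hsupp : σ.support ⊆ insert (Fin.last n) S)
    (hup : ∀ x ∈ S, x < σ x) : σ = cPerm n S := by
  have hlen : (cList n S).length = S.card + 1 := cList_length
  have hnd := cList_nodup hS
  have hsort := cList_sorted hS
  have C : ∀ d i, (hi : i < S.card) → S.card - i = d →
      σ ((cList n S)[i]'(by omega)) = (cList n S)[i+1]'(by omega) := by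
    intro d
    induction d using Nat.strong_induction_on with
    | _ d IH =>
      intro i hi hd
      have hmem : (cList n S)[i]'(by omega) ∈ S := getElem_cList_mem_S hi _
      have hlt : (cList n S)[i]'(by omega) < σ ((cList n S)[i]'(by omega)) := hup _ hmem
      have hmem2 : σ ((cList n S)[i]'(by omega)) ∈ cList n S := by
        rw [mem_cList]
        exact hsupp (Equiv.Perm.apply_mem_support.mpr
          (Equiv.Perm.mem_support.mpr (ne_of_gt hlt)))
      obtain ⟨j, hj, hje⟩ := List.getElem_of_mem hmem2
      have hlt2 : (cList n S)[i]'(by omega) < (cList n S)[j] := by rw [hje]; exact hlt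
      have hij : i < j := by
        by_contra hc
        push_neg at hc
        rcases lt_or_eq_of_le hc with h | h
        · exact absurd hlt2 (asymm (List.pairwise_iff_getElem.mp hsort j i hj (by omega) h))
        · subst h; exact absurd hlt2 (lt_irrefl _)
      by_cases hj1 : j = i + 1
      · subst hj1; exact hje.symm
      · exfalso
        have hj2 : i + 2 ≤ j := by omega
        have hj3 : j - 1 < S.card := by omega
        have hrec := IH (S.card - (j-1)) (by omega) (j-1) hj3 rfl
        have hj4 : j - 1 + 1 = j := by omega
        simp only [hj4] at hrec
        rw [hje] at hrec
        have heq := σ.injective hrec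
        have hji := (List.Nodup.getElem_inj_iff hnd).mp heq
        omega
  have hagree : ∀ x, x ≠ Fin.last n → σ x = cPerm n S x := by
    intro x hx
    by_cases hxS : x ∈ S
    · have hxl : x ∈ S.sort (· ≤ ·) := (Finset.mem_sort (α := Fin (n+1)) (· ≤ ·)).mpr hxS
      obtain ⟨i, hi, rfl⟩ := List.getElem_of_mem hxl
      rw [Finset.length_sort] at hi
      have hx1 : (S.sort (· ≤ ·))[i] = (cList n S)[i]'(by omega) := by
        simp only [cList]
        exact (List.getElem_append_left _).symm
      rw [hx1, C (S.card - i) i hi rfl, cPerm,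
        List.formPerm_apply_getElem _ hnd i (by omega)]
      congr 1
      rw [hlen]
      exact (Nat.mod_eq_of_lt (by omega)).symm
    · have h1 : x ∉ σ.support := fun h => by
        rcases Finset.mem_insert.mp (hsupp h) with h' | h' <;> [exact hx h'; exact hxS h']
      have h2 : x ∉ (cPerm n S).support := fun h => by
        rcases Finset.mem_insert.mp (cPerm_support_le h) with h' | h' <;>
          [exact hx h'; exact hxS h']
      rw [Equiv.Perm.notMem_support.mp h1, Equiv.Perm.notMem_support.mp h2]
  apply Equiv.ext
  intro x
  by_cases hx : x = Fin.last n
  · subst hx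
    have hw : (cPerm n S)⁻¹ (σ (Fin.last n)) = Fin.last n := by
      by_contra hw
      have h5 := hagree _ hw
      rw [show ∀ y, cPerm n S ((cPerm n S)⁻¹ y) = y from fun y => (cPerm n S).apply_symm_apply y] at h5
      exact hw (σ.injective h5)
    calc σ (Fin.last n) = cPerm n S ((cPerm n S)⁻¹ (σ (Fin.last n))) :=
          ((cPerm n S).apply_symm_apply _).symm
      _ = cPerm n S (Fin.last n) := by rw [hw]
  · exact hagree x hx

section prod
variable {S : Finset (Fin (n+1))} {τ : Perm (Fin (n+1))}

lemma tau_fix_closed (hτ : ∀ x ∈ insert (Fin.last n) S, τ x = x) {x : Fin (n+1)}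
    (hx : x ∉ insert (Fin.last n) S) : τ x ∉ insert (Fin.last n) S := by
  intro h
  exact hx (by rw [← τ.injective ((hτ _ h).trans rfl)]; exact h)

lemma prod_apply_mem (hτ : ∀ x ∈ insert (Fin.last n) S, τ x = x) {x : Fin (n+1)}
    (hx : x ∈ insert (Fin.last n) S) : (cPerm n S * τ) x = cPerm n S x := by
  simp [Equiv.Perm.mul_apply, hτ x hx]

lemma prod_apply_not_mem (hτ : ∀ x ∈ insert (Fin.last n) S, τ x = x) {x : Fin (n+1)}
    (hx : x ∉ insert (Fin.last n) S) : (cPerm n S * τ) x = τ x := by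
  have h1 : τ x ∉ insert (Fin.last n) S := tau_fix_closed hτ hx
  have h2 : τ x ∉ (cPerm n S).support := fun h => h1 (cPerm_support_le h)
  simp [Equiv.Perm.mul_apply, Equiv.Perm.notMem_support.mp h2]

lemma prod_disjoint (hτ : ∀ x ∈ insert (Fin.last n) S, τ x = x) :
    (cPerm n S).Disjoint τ := by
  intro x
  by_cases hx : x ∈ insert (Fin.last n) S
  · exact Or.inr (hτ x hx)
  · exact Or.inl (Equiv.Perm.notMem_support.mp (fun h => hx (cPerm_support_le h)))

lemma tau_support (hτ : ∀ x ∈ insert (Fin.last n) S, τ x = x) :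
    τ.support ⊆ (insert (Fin.last n) S)ᶜ := by
  intro x hx
  rw [Finset.mem_compl]
  exact fun h => (Equiv.Perm.mem_support.mp hx) (hτ x h)

lemma prod_sameCycle (hS : Fin.last n ∉ S) (hτ : ∀ x ∈ insert (Fin.last n) S, τ x = x)
    (x : Fin (n+1)) :
    (cPerm n S * τ).SameCycle x (Fin.last n) ↔ x ∈ insert (Fin.last n) S := by
  have hcomm : Commute (cPerm n S) τ := (prod_disjoint hτ).commute
  have hzpow : ∀ (i : ℤ) (y : Fin (n+1)), y ∈ insert (Fin.last n) S →
      ((cPerm n S * τ) ^ i) y = (cPerm n S ^ i) y := by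
    intro i y hy
    rw [hcomm.mul_zpow]
    simp [Equiv.Perm.mul_apply, Equiv.Perm.zpow_apply_eq_self_of_apply_eq_self (hτ y hy)]
  constructor
  · rintro ⟨i, hi⟩
    by_contra hx
    -- then (cPerm * τ)^i x = τ^i x ∉ M, but equals last ∈ M
    have h1 : (τ ^ i) x ∉ insert (Fin.last n) S := by
      intro h
      have := Equiv.Perm.zpow_apply_eq_self_of_apply_eq_self (f := τ) (hτ _ h) i
      -- (τ^i) ((τ^i) x)... instead use injectivity of τ^i
      exact hx (by rw [← (τ ^ i).injective ((this).trans rfl)]; exact h)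
    have h2 : ((cPerm n S * τ) ^ i) x = (τ ^ i) x := by
      rw [hcomm.mul_zpow]
      simp only [Equiv.Perm.mul_apply]
      have h3 : (τ ^ i) x ∉ (cPerm n S).support := fun h => h1 (cPerm_support_le h)
      exact Equiv.Perm.notMem_support.mp
        (fun h => h3 (Equiv.Perm.support_zpow_le _ _ h))
    rw [h2] at hi
    exact h1 (hi ▸ Finset.mem_insert_self _ _)
  · intro hx
    rcases S.eq_empty_or_nonempty with rfl | hne
    · have : x = Fin.last n := by simpa using hx
      subst this; exact Equiv.Perm.SameCycle.refl _ _
    · have hc := cPerm_isCycle hS hne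
      have hsup := cPerm_support hS hne
      have h1 : cPerm n S x ≠ x := by
        rw [← Equiv.Perm.mem_support, hsup]; exact hx
      have h2 : cPerm n S (Fin.last n) ≠ Fin.last n := by
        rw [← Equiv.Perm.mem_support, hsup]; exact Finset.mem_insert_self _ _
      obtain ⟨i, hi⟩ := hc.sameCycle h1 h2
      exact ⟨i, by rw [hzpow i x hx]; exact hi⟩

end prod

lemma fixp_eq_card_sub {m : ℕ} (f : Perm (Fin m)) : fixp f = m - f.support.card := by
  have : (Finset.univ.filter fun i => f i = i) = f.supportᶜ := by
    ext i
    simp [Equiv.Perm.mem_support, Finset.mem_compl]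
  rw [fixp, this, Finset.card_compl]
  simp

section prodstat
variable {S : Finset (Fin (n+1))} {τ : Perm (Fin (n+1))}

lemma prod_mem_Qhat (hS : Fin.last n ∉ S) (hτ : ∀ x ∈ insert (Fin.last n) S, τ x = x) :
    cPerm n S * τ ∈ Qhat n := by
  rw [Qhat, Finset.mem_filter]
  refine ⟨Finset.mem_univ _, ?_⟩
  intro x hcyc hx
  rw [prod_sameCycle hS hτ] at hcyc
  have hxS : x ∈ S := by
    rcases Finset.mem_insert.mp hcyc with h | h
    · exact absurd h hx
    · exact h
  rw [prod_apply_mem hτ hcyc]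
  exact cPerm_lt_apply hS hxS

lemma prod_exc (hS : Fin.last n ∉ S) (hτ : ∀ x ∈ insert (Fin.last n) S, τ x = x) :
    exc (cPerm n S * τ) = S.card + exc τ := by
  have key : (Finset.univ.filter fun i => i < (cPerm n S * τ) i)
      = S ∪ (Finset.univ.filter fun i => i < τ i) := by
    ext i
    simp only [Finset.mem_filter, Finset.mem_univ, true_and, Finset.mem_union]
    constructor
    · intro hi
      by_cases hm : i ∈ insert (Fin.last n) S
      · rcases Finset.mem_insert.mp hm with h | h
        · exfalso
          subst h
          rw [prod_apply_mem hτ hm] at hi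
          exact absurd (Fin.le_last _) (not_le.mpr hi)
        · exact Or.inl h
      · rw [prod_apply_not_mem hτ hm] at hi
        exact Or.inr hi
    · intro hi
      rcases hi with h | h
      · rw [prod_apply_mem hτ (Finset.mem_insert_of_mem h)]
        exact cPerm_lt_apply hS h
      · have hm : i ∉ insert (Fin.last n) S := by
          intro hmem
          rw [hτ i hmem] at h
          exact lt_irrefl _ h
        rw [prod_apply_not_mem hτ hm]
        exact h
  rw [exc, key, Finset.card_union_of_disjoint, exc]
  rw [Finset.disjoint_left]
  intro a ha ha2
  rw [Finset.mem_filter] at ha2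
  rw [hτ a (Finset.mem_insert_of_mem ha)] at ha2
  exact lt_irrefl _ ha2.2

lemma prod_support_card (hS : Fin.last n ∉ S) (hτ : ∀ x ∈ insert (Fin.last n) S, τ x = x) :
    (cPerm n S * τ).support.card = (cPerm n S).support.card + τ.support.card :=
  (prod_disjoint hτ).card_support_mul

lemma prod_cycleType_card (hS : Fin.last n ∉ S) (hτ : ∀ x ∈ insert (Fin.last n) S, τ x = x) :
    (cPerm n S * τ).cycleType.card
      = (if S = ∅ then 0 else 1) + τ.cycleType.card := by
  rw [(prod_disjoint hτ).cycleType_mul, Multiset.card_add]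
  congr 1
  rcases S.eq_empty_or_nonempty with rfl | hne
  · simp [cPerm_empty]
  · rw [cPerm_cycleType hS hne, if_neg (Finset.nonempty_iff_ne_empty.mp hne)]
    rfl

lemma prod_fcyc (hS : Fin.last n ∉ S) (hτ : ∀ x ∈ insert (Fin.last n) S, τ x = x) :
    fcyc (cPerm n S * τ) = S.card + 1 := by
  rw [fcyc]
  have : (Finset.univ.filter fun x => (cPerm n S * τ).SameCycle x (Fin.last n))
      = insert (Fin.last n) S := by
    ext i
    simp [prod_sameCycle hS hτ]
  rw [this, Finset.card_insert_of_notMem hS]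

end prodstat

section ext
variable {S : Finset (Fin (n+1))}

lemma compl_card (hS : Fin.last n ∉ S) :
    ((insert (Fin.last n) S)ᶜ : Finset (Fin (n+1))).card = n - S.card := by
  rw [Finset.card_compl, Finset.card_insert_of_notMem hS]
  have hle : S.card ≤ n := by
    have : S ⊆ Finset.univ.erase (Fin.last n) := fun x hx =>
      Finset.mem_erase.mpr ⟨fun h => hS (h ▸ hx), Finset.mem_univ _⟩
    have := Finset.card_le_card this
    rwa [Finset.card_erase_of_mem (Finset.mem_univ _), Finset.card_univ, Fintype.card_fin,
      Nat.add_sub_cancel] at this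
  simp only [Fintype.card_fin]
  omega

/-- the order isomorphism from `Fin (n - S.card)` to the complement of `insert last S`. -/
noncomputable def eqv (hS : Fin.last n ∉ S) :
    Fin (n - S.card) ≃o {x : Fin (n+1) // x ∈ ((insert (Fin.last n) S)ᶜ : Finset (Fin (n+1)))} :=
  Finset.orderIsoOfFin _ (compl_card hS)

/-- extend a permutation of `Fin (n - S.card)` to `Fin (n+1)` via `eqv`. -/
noncomputable def extPerm (hS : Fin.last n ∉ S) (g : Perm (Fin (n - S.card))) :
    Perm (Fin (n+1)) :=
  g.extendDomain (eqv hS).toEquiv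

lemma extPerm_fix (hS : Fin.last n ∉ S) (g : Perm (Fin (n - S.card))) :
    ∀ x ∈ insert (Fin.last n) S, extPerm hS g x = x := by
  intro x hx
  apply Equiv.Perm.extendDomain_apply_not_subtype
  rw [Finset.mem_compl]
  exact fun h => h hx

lemma extPerm_apply (hS : Fin.last n ∉ S) (g : Perm (Fin (n - S.card)))
    (a : Fin (n - S.card)) :
    extPerm hS g ((eqv hS a : Fin (n+1))) = (eqv hS (g a) : Fin (n+1)) := by
  have := Equiv.Perm.extendDomain_apply_image g (eqv hS).toEquiv a
  rw [extPerm]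
  exact this

lemma extPerm_support_card (hS : Fin.last n ∉ S) (g : Perm (Fin (n - S.card))) :
    (extPerm hS g).support.card = g.support.card :=
  Equiv.Perm.card_support_extend_domain _

lemma extPerm_cycleType (hS : Fin.last n ∉ S) (g : Perm (Fin (n - S.card))) :
    (extPerm hS g).cycleType = g.cycleType :=
  Equiv.Perm.cycleType_extendDomain _

lemma extPerm_exc (hS : Fin.last n ∉ S) (g : Perm (Fin (n - S.card))) :
    exc (extPerm hS g) = exc g := by
  have key : (Finset.univ.filter fun i => i < extPerm hS g i)
      = (Finset.univ.filter fun a => a < g a).image (fun a => (eqv hS a : Fin (n+1))) := by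
    ext i
    simp only [Finset.mem_filter, Finset.mem_univ, true_and, Finset.mem_image]
    constructor
    · intro hi
      have hne : extPerm hS g i ≠ i := ne_of_gt hi
      have hmem : i ∈ ((insert (Fin.last n) S)ᶜ : Finset (Fin (n+1))) := by
        by_contra h
        rw [Finset.notMem_compl] at h
        exact hne (extPerm_fix hS g i h)
      set a := (eqv hS).symm ⟨i, hmem⟩ with ha
      have hia : i = (eqv hS a : Fin (n+1)) := by rw [ha]; simp
      refine ⟨a, ?_, hia.symm⟩
      have := hi
      rw [hia, extPerm_apply hS g a] at this
      have h2 : eqv hS a < eqv hS (g a) := Subtype.coe_lt_coe.mp this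
      exact (OrderIso.lt_iff_lt _).mp h2
    · rintro ⟨a, ha, rfl⟩
      rw [extPerm_apply hS g a]
      exact Subtype.coe_lt_coe.mpr ((OrderIso.lt_iff_lt _).mpr ha)
  rw [exc, key, Finset.card_image_of_injective _ (fun a b hab =>
    (eqv hS).injective (Subtype.ext hab)), exc]

lemma extPerm_injective (hS : Fin.last n ∉ S) : Function.Injective (extPerm hS) := by
  intro g g' h
  apply Equiv.ext
  intro a
  have := congrArg (fun f : Perm (Fin (n+1)) => f ((eqv hS a : Fin (n+1)))) h
  simp only [extPerm_apply] at this
  exact (eqv hS).injective (Subtype.ext this)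

lemma extPerm_surjective (hS : Fin.last n ∉ S) (τ : Perm (Fin (n+1)))
    (hτ : ∀ x ∈ insert (Fin.last n) S, τ x = x) :
    ∃ g, extPerm hS g = τ := by
  have hmem : ∀ x : Fin (n+1), x ∈ ((insert (Fin.last n) S)ᶜ : Finset (Fin (n+1))) ↔
      τ x ∈ ((insert (Fin.last n) S)ᶜ : Finset (Fin (n+1))) := by
    intro x
    simp only [Finset.mem_compl]
    constructor
    · intro hx
      exact tau_fix_closed hτ hx
    · intro hx h
      exact hx (by rw [hτ x h]; exact h)
  set f : Perm {x : Fin (n+1) // x ∈ ((insert (Fin.last n) S)ᶜ : Finset (Fin (n+1)))} :=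
    τ.subtypePerm (fun x => (hmem x).symm) with hf
  refine ⟨((eqv hS).toEquiv.permCongr).symm f, ?_⟩
  apply Equiv.ext
  intro x
  by_cases hx : x ∈ insert (Fin.last n) S
  · rw [extPerm_fix hS _ x hx, hτ x hx]
  · have hxc : x ∈ ((insert (Fin.last n) S)ᶜ : Finset (Fin (n+1))) :=
      Finset.mem_compl.mpr hx
    set a := (eqv hS).symm ⟨x, hxc⟩ with ha
    have hxa : x = (eqv hS a : Fin (n+1)) := by rw [ha]; simp
    rw [hxa, extPerm_apply]
    have : ((eqv hS).toEquiv.permCongr.symm f) a = (eqv hS).symm (f (eqv hS a)) := by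
      simp [Equiv.permCongr_apply]
    rw [this]
    simp only [OrderIso.apply_symm_apply]
    rfl

end ext

/-- the set of non-maximal elements of the cycle containing the maximum. -/
noncomputable def Sset (σ : Perm (Fin (n+1))) : Finset (Fin (n+1)) :=
  Finset.univ.filter fun x => σ.SameCycle x (Fin.last n) ∧ x ≠ Fin.last n

lemma Sset_prod {S : Finset (Fin (n+1))} {τ : Perm (Fin (n+1))} (hS : Fin.last n ∉ S)
    (hτ : ∀ x ∈ insert (Fin.last n) S, τ x = x) :
    Sset (cPerm n S * τ) = S := by
  ext i
  rw [Sset, Finset.mem_filter]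
  simp only [Finset.mem_univ, true_and, prod_sameCycle hS hτ, Finset.mem_insert]
  constructor
  · rintro ⟨h1 | h1, h2⟩
    · exact absurd h1 h2
    · exact h1
  · intro h
    exact ⟨Or.inr h, fun he => hS (he ▸ h)⟩

lemma sigma_fix {S : Finset (Fin (n+1))} (hS : Fin.last n ∉ S) {σ : Perm (Fin (n+1))}
    (hQ : σ ∈ Qhat n) (hSs : Sset σ = S) :
    ∀ x ∈ insert (Fin.last n) S, σ x = cPerm n S x := by
  have hQ' : ∀ z, σ.SameCycle z (Fin.last n) → z ≠ Fin.last n → z < σ z :=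
    (Finset.mem_filter.mp hQ).2
  have hcyc : ∀ z, σ.SameCycle z (Fin.last n) ↔ z ∈ insert (Fin.last n) S := by
    intro z
    by_cases hz : z = Fin.last n
    · subst hz
      simp [Equiv.Perm.SameCycle.refl]
    · rw [← hSs, Sset]
      simp only [Finset.mem_insert, hz, false_or, Finset.mem_filter, Finset.mem_univ, true_and]
      tauto
  rcases S.eq_empty_or_nonempty with rfl | hne
  · have hσL : σ (Fin.last n) = Fin.last n := by
      have h1 : σ.SameCycle (σ (Fin.last n)) (Fin.last n) := ⟨-1, by simp⟩
      have := (hcyc _).mp h1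
      simpa using this
    intro x hx
    have hx' : x = Fin.last n := by simpa using hx
    subst hx'
    rw [hσL, cPerm_empty]
    rfl
  · have hσL : σ (Fin.last n) ≠ Fin.last n := by
      intro hL
      obtain ⟨w, hw⟩ := hne
      have hwcyc : σ.SameCycle w (Fin.last n) :=
        (hcyc w).mpr (Finset.mem_insert_of_mem hw)
      obtain ⟨i, hi⟩ := hwcyc
      have : w = Fin.last n := by
        have h2 : (σ ^ (-i)) ((σ ^ i) w) = (σ ^ (-i)) (Fin.last n) := by rw [hi]
        rw [← Equiv.Perm.mul_apply, ← zpow_add, neg_add_cancel, zpow_zero,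
          Equiv.Perm.zpow_apply_eq_self_of_apply_eq_self hL] at h2
        simpa using h2
      exact hS (this ▸ hw)
    set c := σ.cycleOf (Fin.last n) with hc
    have hLsupp : Fin.last n ∈ σ.support := Equiv.Perm.mem_support.mpr hσL
    have hsuppc : c.support = insert (Fin.last n) S := by
      ext z
      rw [hc, Equiv.Perm.mem_support_cycleOf_iff]
      constructor
      · rintro ⟨h1, _⟩
        exact (hcyc z).mp h1.symm
      · intro h
        exact ⟨((hcyc z).mpr h).symm, hLsupp⟩
    have happly : ∀ z ∈ insert (Fin.last n) S, c z = σ z := by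
      intro z hz
      rw [hc, Equiv.Perm.cycleOf_apply]
      rw [if_pos ((hcyc z).mpr hz).symm]
    have hceq : c = cPerm n S := by
      apply cPerm_unique hS
      · rw [hsuppc]
      · intro z hz
        rw [happly z (Finset.mem_insert_of_mem hz)]
        exact hQ' z ((hcyc z).mpr (Finset.mem_insert_of_mem hz)) (fun he => hS (he ▸ hz))
    intro z hz
    rw [← hceq, happly z hz]

section terms
variable {S : Finset (Fin (n+1))}

lemma S_card_le (hS : Fin.last n ∉ S) : S.card ≤ n := by
  have h : S ⊆ Finset.univ.erase (Fin.last n) := fun x hx =>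
    Finset.mem_erase.mpr ⟨fun h => hS (h ▸ hx), Finset.mem_univ _⟩
  have := Finset.card_le_card h
  rwa [Finset.card_erase_of_mem (Finset.mem_univ _), Finset.card_univ, Fintype.card_fin,
    Nat.add_sub_cancel] at this

lemma cPerm_support_card (hS : Fin.last n ∉ S) :
    (cPerm n S).support.card = if S.card = 0 then 0 else S.card + 1 := by
  rcases S.eq_empty_or_nonempty with rfl | hne
  · simp [cPerm_empty]
  · rw [cPerm_support hS hne, Finset.card_insert_of_notMem hS,
      if_neg (by simpa using Finset.card_pos.mpr hne |>.ne')]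

lemma term_exc (hS : Fin.last n ∉ S) (g : Perm (Fin (n - S.card))) :
    exc (cPerm n S * extPerm hS g) = S.card + exc g := by
  rw [prod_exc hS (extPerm_fix hS g), extPerm_exc]

lemma term_fixp (hS : Fin.last n ∉ S) (g : Perm (Fin (n - S.card))) :
    fixp (cPerm n S * extPerm hS g) = fixp g + (if S.card = 0 then 1 else 0) := by
  rw [fixp_eq_card_sub, fixp_eq_card_sub, prod_support_card hS (extPerm_fix hS g),
    extPerm_support_card, cPerm_support_card hS]
  have h1 : g.support.card ≤ n - S.card := by
    simpa using Finset.card_le_univ g.support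
  have h2 : S.card ≤ n := S_card_le hS
  split_ifs with h
  · omega
  · have : 1 ≤ S.card := Nat.pos_of_ne_zero h
    omega

lemma term_cyc (hS : Fin.last n ∉ S) (g : Perm (Fin (n - S.card))) :
    cyc (cPerm n S * extPerm hS g) = cyc g + 1 := by
  rw [cyc, cyc, prod_cycleType_card hS (extPerm_fix hS g), extPerm_cycleType,
    term_fixp hS g]
  rcases S.eq_empty_or_nonempty with rfl | hne
  · simp; omega
  · rw [if_neg (Finset.nonempty_iff_ne_empty.mp hne),
      if_neg (by simpa using Finset.card_pos.mpr hne |>.ne')]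
    omega

lemma term_fcyc (hS : Fin.last n ∉ S) (g : Perm (Fin (n - S.card))) :
    fcyc (cPerm n S * extPerm hS g) = S.card + 1 :=
  prod_fcyc hS (extPerm_fix hS g)

lemma fiber_sum {R : Type*} [CommRing R] (x y q p : R) (hS : Fin.last n ∉ S) :
    ∑ σ ∈ (Qhat n).filter (fun σ => Sset σ = S),
        x ^ exc σ * y ^ fixp σ * q ^ cyc σ * p ^ fcyc σ
      = x ^ S.card * (if S.card = 0 then y else 1) * q * p ^ (S.card + 1)
          * Apoly (n - S.card) x y q := by
  rw [Apoly, Finset.mul_sum]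
  refine (Finset.sum_bij (fun g _ => cPerm n S * extPerm hS g) ?_ ?_ ?_ ?_).symm
  · intro g _
    rw [Finset.mem_filter]
    exact ⟨prod_mem_Qhat hS (extPerm_fix hS g), Sset_prod hS (extPerm_fix hS g)⟩
  · intro g _ g' _ h
    exact extPerm_injective hS (mul_left_cancel h)
  · intro σ hσ
    rw [Finset.mem_filter] at hσ
    have hfix : ∀ z ∈ insert (Fin.last n) S, ((cPerm n S)⁻¹ * σ) z = z := by
      intro z hz
      rw [Equiv.Perm.mul_apply, sigma_fix hS hσ.1 hσ.2 z hz]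
      simp
    obtain ⟨g, hg⟩ := extPerm_surjective hS _ hfix
    refine ⟨g, Finset.mem_univ _, ?_⟩
    show cPerm n S * extPerm hS g = σ
    rw [hg]
    group
  · intro g _
    rw [term_exc hS g, term_fixp hS g, term_cyc hS g, term_fcyc hS g]
    split_ifs with h
    · ring
    · ring

end terms


theorem Atilde_eq_Apoly_sum {R : Type*} [CommRing R] (x y q p : R) (n : ℕ) :
    ∑ σ ∈ Qhat n, x ^ exc σ * y ^ fixp σ * q ^ cyc σ * p ^ fcyc σ
      = y * p * q * Apoly n x y q
        + ∑ k ∈ Finset.Icc 1 n,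
            (n.choose k : R) * x ^ k * q * p ^ (k + 1) * Apoly (n - k) x y q := by
  have hmap : ∀ σ ∈ Qhat n, Sset σ ∈ (Finset.univ.erase (Fin.last n)).powerset := by
    intro σ _
    rw [Finset.mem_powerset]
    intro z hz
    rw [Sset, Finset.mem_filter] at hz
    exact Finset.mem_erase.mpr ⟨hz.2.2, Finset.mem_univ _⟩
  rw [← Finset.sum_fiberwise_of_maps_to hmap
    (fun σ => x ^ exc σ * y ^ fixp σ * q ^ cyc σ * p ^ fcyc σ)]
  have step1 : ∀ S ∈ (Finset.univ.erase (Fin.last n)).powerset,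
      ∑ σ ∈ (Qhat n).filter (fun σ => Sset σ = S),
          x ^ exc σ * y ^ fixp σ * q ^ cyc σ * p ^ fcyc σ
        = x ^ S.card * (if S.card = 0 then y else 1) * q * p ^ (S.card + 1)
            * Apoly (n - S.card) x y q := by
    intro S hs
    have hS : Fin.last n ∉ S := fun h =>
      (Finset.mem_erase.mp (Finset.mem_powerset.mp hs h)).1 rfl
    exact fiber_sum x y q p hS
  rw [Finset.sum_congr rfl step1]
  have hcard : (Finset.univ.erase (Fin.last n) : Finset (Fin (n+1))).card = n := by
    rw [Finset.card_erase_of_mem (Finset.mem_univ _), Finset.card_univ, Fintype.card_fin,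
      Nat.add_sub_cancel]
  rw [Finset.sum_powerset]
  rw [hcard]
  have step2 : ∀ j ∈ Finset.range (n+1),
      ∑ S ∈ Finset.powersetCard j (Finset.univ.erase (Fin.last n)),
          (x ^ S.card * (if S.card = 0 then y else 1) * q * p ^ (S.card + 1)
            * Apoly (n - S.card) x y q)
        = (n.choose j : R) * (x ^ j * (if j = 0 then y else 1) * q * p ^ (j + 1)
            * Apoly (n - j) x y q) := by
    intro j _
    rw [Finset.sum_congr rfl (fun S hs => by
      rw [(Finset.mem_powersetCard.mp hs).2]), Finset.sum_const, Finset.card_powersetCard,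
      hcard, nsmul_eq_mul]
  rw [Finset.sum_congr rfl step2]
  have hins : Finset.range (n+1) = insert 0 (Finset.Icc 1 n) := by
    ext j
    simp only [Finset.mem_range, Finset.mem_insert, Finset.mem_Icc]
    omega
  rw [hins, Finset.sum_insert (by simp)]
  congr 1
  · simp [Nat.choose_zero_right]
    ring
  · apply Finset.sum_congr rfl
    intro j hj
    rw [Finset.mem_Icc] at hj
    rw [if_neg (by omega)]
    ring
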